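/- Let $A$ be a finite-dimensional nilpotent commutative associative real algebra with an inner product, extended to $\mathrm{aff}(A)=A\oplus A$ as the orthogonal direct sum. Let $J(a,b)=(b,-a)$ be the standard abelian complex structure. Then the resulting Hermitian structure on $\mathrm{aff}(A)$ is balanced if and only if there exists an orthonormal basis $\{e_1,\ldots,e_n\}$ of $A$ with $\sum_{i=1}^n e_i^2=0$. -/

import Mathlib

/-- The bracket of `aff(A) = A ⊕ A`: `[(a,b), (a',b')] = (0, ab' - ba')`. -/
def affBracket {A : Type*} [NonUnitalCommRing A] (u v : A × A) : A × A :=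
  (0, u.1 * v.2 - u.2 * v.1)

/-- The standard abelian complex structure on `aff(A)`: `J(a,b) = (b,-a)`. -/
def affJ {A : Type*} [NonUnitalCommRing A] (u : A × A) : A × A :=
  (u.2, -u.1)

/-- Iterated product `a * a * ⋯ * a` (`m+1` factors) in a non-unital ring. -/
def iterProd {A : Type*} [NonUnitalCommRing A] (a : A) : ℕ → A
  | 0 => a
  | m + 1 => iterProd a m * a

section Helpers

open Finset

/-- For an orthonormal basis, coordinates are given by the inner product. -/
lemma repr_orthonormal {V : Type*} [AddCommGroup V] [Module ℝ V]
    {ι : Type*} [Fintype ι] [DecidableEq ι]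
    (g : V →ₗ[ℝ] V →ₗ[ℝ] ℝ) (b : Module.Basis ι ℝ V)
    (hb : ∀ i j, g (b i) (b j) = if i = j then (1 : ℝ) else 0)
    (x : V) (i : ι) : b.repr x i = g x (b i) := by
  conv_rhs => rw [← b.sum_repr x]
  simp [hb, mul_ite, -Module.Basis.sum_repr]

/-- The "trace" of a bilinear map over an orthonormal basis is basis independent. -/
lemma trace_invariant {V W : Type*} [AddCommGroup V] [Module ℝ V]
    [AddCommGroup W] [Module ℝ W]
    {ι κ : Type*} [Fintype ι] [Fintype κ] [DecidableEq ι] [DecidableEq κ]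
    (g : V →ₗ[ℝ] V →ₗ[ℝ] ℝ) (hg : ∀ x y, g x y = g y x)
    (B : V →ₗ[ℝ] V →ₗ[ℝ] W)
    (v : Module.Basis ι ℝ V) (w : Module.Basis κ ℝ V)
    (hv : ∀ i j, g (v i) (v j) = if i = j then (1 : ℝ) else 0)
    (hw : ∀ i j, g (w i) (w j) = if i = j then (1 : ℝ) else 0) :
    ∑ i, B (v i) (v i) = ∑ j, B (w j) (w j) := by
  classical
  have key : ∀ i k : ι,
      (∑ j, (v.repr (w j) i) * (v.repr (w j) k)) = if i = k then (1 : ℝ) else 0 := by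
    intro i k
    have h1 : ∀ j, v.repr (w j) i = w.repr (v i) j := fun j => by
      rw [repr_orthonormal g v hv, repr_orthonormal g w hw, hg]
    have h2 : ∀ j, v.repr (w j) k = w.repr (v k) j := fun j => by
      rw [repr_orthonormal g v hv, repr_orthonormal g w hw, hg]
    calc (∑ j, (v.repr (w j) i) * (v.repr (w j) k))
        = ∑ j, (w.repr (v k) j) * (w.repr (v i) j) := by
          refine Finset.sum_congr rfl fun j _ => ?_
          rw [h1, h2, mul_comm]
      _ = g (v i) (v k) := by
          conv_rhs => rw [← w.sum_repr (v k)]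
          simp only [map_sum, map_smul, smul_eq_mul]
          refine Finset.sum_congr rfl fun j _ => ?_
          simp only [repr_orthonormal g w hw]
      _ = if i = k then (1 : ℝ) else 0 := hv i k
  symm
  calc ∑ j, B (w j) (w j)
      = ∑ j, B (∑ i, v.repr (w j) i • v i) (∑ k, v.repr (w j) k • v k) := by
        refine Finset.sum_congr rfl fun j _ => ?_
        rw [v.sum_repr (w j)]
    _ = ∑ j, ∑ i, ∑ k, ((v.repr (w j) i) * (v.repr (w j) k)) • B (v i) (v k) := by
        refine Finset.sum_congr rfl fun j _ => ?_
        simp only [map_sum, map_smul, LinearMap.sum_apply, LinearMap.smul_apply,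
          Finset.smul_sum, smul_smul]
        rw [Finset.sum_comm]
        exact Finset.sum_congr rfl fun i _ => Finset.sum_congr rfl fun k _ => by rw [mul_comm]
    _ = ∑ i, ∑ k, (∑ j, (v.repr (w j) i) * (v.repr (w j) k)) • B (v i) (v k) := by
        rw [Finset.sum_comm]
        refine Finset.sum_congr rfl fun i _ => ?_
        rw [Finset.sum_comm]
        refine Finset.sum_congr rfl fun k _ => ?_
        rw [Finset.sum_smul]
    _ = ∑ i, B (v i) (v i) := by
        simp [key, ite_smul]

end Helpers

set_option maxHeartbeats 1000000 in
/-- Let `A` be a finite-dimensional nilpotent commutative associative real algebra with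
an inner product `⟨·,·⟩`, extended to `aff(A) = A ⊕ A` as the orthogonal direct sum
`g((a,b),(a',b')) = ⟨a,a'⟩ + ⟨b,b'⟩`, and let `J(a,b) = (b,-a)` be the standard abelian
complex structure.  The resulting Hermitian structure on `aff(A)` is balanced (i.e.
`∑ᵢ ⁅J wᵢ, wᵢ⁆ = 0` for an orthonormal basis `w` of `aff(A)`, the balancedness
criterion on unimodular Lie algebras) if and only if there is an orthonormal basis
`e₁, …, eₙ` of `A` with `∑ᵢ eᵢ² = 0`. -/
theorem aff_balanced_iff_orthonormal_sum_squares_zero {A : Type*}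
    [NonUnitalCommRing A] [Module ℝ A] [IsScalarTower ℝ A A] [SMulCommClass ℝ A A]
    [FiniteDimensional ℝ A]
    -- `A` is nilpotent (for finite-dimensional commutative algebras this is
    -- equivalent to every element being nilpotent)
    (hnil : ∀ a : A, ∃ m : ℕ, iterProd a m = 0)
    -- the inner product on `A`
    (gA : A →ₗ[ℝ] A →ₗ[ℝ] ℝ) (hsymm : ∀ x y, gA x y = gA y x)
    (hpos : ∀ x : A, x ≠ 0 → 0 < gA x x) :
    (∃ w : Module.Basis (Fin (2 * Module.finrank ℝ A)) ℝ (A × A),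
      (∀ i j, gA (w i).1 (w j).1 + gA (w i).2 (w j).2 =
        if i = j then (1 : ℝ) else 0) ∧
      ∑ i, affBracket (affJ (w i)) (w i) = 0) ↔
    (∃ e : Module.Basis (Fin (Module.finrank ℝ A)) ℝ A,
      (∀ i j, gA (e i) (e j) = if i = j then (1 : ℝ) else 0) ∧
      ∑ i, e i * e i = 0) := by
  classical
  -- the inner product on `A × A`
  set G : (A × A) →ₗ[ℝ] (A × A) →ₗ[ℝ] ℝ :=
    LinearMap.mk₂ ℝ (fun u v => gA u.1 v.1 + gA u.2 v.2)
      (fun u u' v => by simp [map_add]; ring)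
      (fun c u v => by simp [map_smul]; ring)
      (fun u v v' => by simp [map_add]; ring)
      (fun c u v => by simp [map_smul]; ring) with hG
  have hGsymm : ∀ x y : A × A, G x y = G y x := by
    intro x y; simp [hG, LinearMap.mk₂_apply, hsymm x.1 y.1, hsymm x.2 y.2]
  -- the bilinear map `B(u,v) = u₁v₁ + u₂v₂`
  set B : (A × A) →ₗ[ℝ] (A × A) →ₗ[ℝ] A :=
    LinearMap.mk₂ ℝ (fun u v => u.1 * v.1 + u.2 * v.2)
      (fun u u' v => by simp [add_mul]; abel)
      (fun c u v => by simp [smul_mul_assoc, smul_add])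
      (fun u v v' => by simp [mul_add]; abel)
      (fun c u v => by simp [mul_smul_comm, smul_add]) with hB
  -- bracket sum in terms of `B`
  have hbr : ∀ u : A × A, affBracket (affJ u) u = (0, B u u) := by
    intro u
    simp [affBracket, affJ, hB, LinearMap.mk₂_apply, neg_mul, sub_neg_eq_add, add_comm]
  constructor
  · rintro ⟨w, hw, hsum⟩
    -- construct an orthonormal basis of `A` from `gA`
    letI core : InnerProductSpace.Core ℝ A :=
      { inner := fun x y => gA x y
        conj_inner_symm := fun x y => by simpa using hsymm y x
        re_inner_nonneg := fun x => by
          rcases eq_or_ne x 0 with h | h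
          · simp [h]
          · exact (hpos x h).le
        definite := fun x hx => by
          by_contra h
          exact absurd hx (ne_of_gt (hpos x h))
        add_left := fun x y z => by simp [map_add]
        smul_left := fun x y r => by simp }
    letI : NormedAddCommGroup A := core.toNormedAddCommGroup
    letI : InnerProductSpace ℝ A := InnerProductSpace.ofCore core.toCore
    let ob := stdOrthonormalBasis ℝ A
    let e : Module.Basis (Fin (Module.finrank ℝ A)) ℝ A := ob.toBasis
    have he : ∀ i j, gA (e i) (e j) = if i = j then (1 : ℝ) else 0 := by
      intro i j
      have h1 := orthonormal_iff_ite.mp ob.orthonormal i j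
      have h2 : gA (e i) (e j) = (inner ℝ (ob i) (ob j) : ℝ) := by
        simp only [e, OrthonormalBasis.coe_toBasis]; rfl
      rw [h2, h1]
    refine ⟨e, he, ?_⟩
    -- orthonormality of the product basis wrt `G`
    have hvE : ∀ s t : Fin (Module.finrank ℝ A) ⊕ Fin (Module.finrank ℝ A),
        G ((e.prod e) s) ((e.prod e) t) = if s = t then (1 : ℝ) else 0 := by
      rintro (s | s) (t | t) <;>
        simp [hG, Module.Basis.prod_apply_inl_fst, Module.Basis.prod_apply_inl_snd,
          Module.Basis.prod_apply_inr_fst, Module.Basis.prod_apply_inr_snd, he]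
    have hw' : ∀ i j, G (w i) (w j) = if i = j then (1 : ℝ) else 0 := by
      intro i j; rw [← hw i j]; simp [hG]
    have htr := trace_invariant G hGsymm B (e.prod e) w hvE hw'
    -- the `w`-sum vanishes
    have hwz : ∑ j, B (w j) (w j) = 0 := by
      have := congrArg Prod.snd hsum
      rw [Prod.snd_sum] at this
      simpa only [hbr, Prod.snd_zero] using this
    rw [hwz, Fintype.sum_sum_type] at htr
    have htr' : (∑ i, e i * e i) + (∑ i, e i * e i) = 0 := by
      have h1 : ∀ i, B ((e.prod e) (Sum.inl i)) ((e.prod e) (Sum.inl i)) = e i * e i := by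
        intro i
        simp [hB, Module.Basis.prod_apply_inl_fst, Module.Basis.prod_apply_inl_snd]
      have h2 : ∀ i, B ((e.prod e) (Sum.inr i)) ((e.prod e) (Sum.inr i)) = e i * e i := by
        intro i
        simp [hB, Module.Basis.prod_apply_inr_fst, Module.Basis.prod_apply_inr_snd]
      simp only [h1, h2] at htr
      exact htr
    have h2smul : (2 : ℝ) • (∑ i, e i * e i) = 0 := by rw [two_smul]; exact htr'
    have := congrArg (fun y => (2 : ℝ)⁻¹ • y) h2smul
    simpa [smul_smul] using this
  · rintro ⟨e, he, hsum⟩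
    let σ : (Fin (Module.finrank ℝ A) ⊕ Fin (Module.finrank ℝ A)) ≃ Fin (2 * Module.finrank ℝ A) :=
      finSumFinEquiv.trans (finCongr (two_mul (Module.finrank ℝ A)).symm)
    refine ⟨(e.prod e).reindex σ, ?_, ?_⟩
    · intro i j
      rw [Module.Basis.reindex_apply, Module.Basis.reindex_apply]
      have hiff : (i = j) ↔ (σ.symm i = σ.symm j) := (Equiv.apply_eq_iff_eq σ.symm).symm
      rw [if_congr hiff rfl rfl]
      rcases σ.symm i with s | s <;> rcases σ.symm j with t | t <;>
        simp [Module.Basis.prod_apply_inl_fst, Module.Basis.prod_apply_inl_snd,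
          Module.Basis.prod_apply_inr_fst, Module.Basis.prod_apply_inr_snd, he]
    · have hre : ∀ i, ((e.prod e).reindex σ) i = (e.prod e) (σ.symm i) := fun i =>
        Module.Basis.reindex_apply _ _ _
      calc ∑ i, affBracket (affJ (((e.prod e).reindex σ) i)) (((e.prod e).reindex σ) i)
          = ∑ i, affBracket (affJ ((e.prod e) (σ.symm i))) ((e.prod e) (σ.symm i)) := by
            refine Finset.sum_congr rfl fun i _ => by rw [hre]
        _ = ∑ s, affBracket (affJ ((e.prod e) s)) ((e.prod e) s) :=
            Equiv.sum_comp σ.symm (fun s => affBracket (affJ ((e.prod e) s)) ((e.prod e) s))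
        _ = ∑ s, ((0 : A), B ((e.prod e) s) ((e.prod e) s)) := by
            refine Finset.sum_congr rfl fun s _ => hbr _
        _ = 0 := by
            rw [Fintype.sum_sum_type]
            have h1 : ∀ i, B ((e.prod e) (Sum.inl i)) ((e.prod e) (Sum.inl i)) = e i * e i := by
              intro i
              simp [hB, Module.Basis.prod_apply_inl_fst, Module.Basis.prod_apply_inl_snd]
            have h2 : ∀ i, B ((e.prod e) (Sum.inr i)) ((e.prod e) (Sum.inr i)) = e i * e i := by
              intro i
              simp [hB, Module.Basis.prod_apply_inr_fst, Module.Basis.prod_apply_inr_snd]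
            apply Prod.ext
            · simp [Prod.fst_add, Prod.fst_sum]
            · simp only [Prod.snd_add, Prod.snd_sum, Prod.snd_zero]
              simp only [h1, h2]
              rw [hsum, add_zero]
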